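/- Suppose the profile curve (x(s), z(s)) of a rotational λ-translating soliton, satisfying x' = cos θ, z' = sin θ, θ' = 2λ + cos θ − sin θ/x for s > 0 with x > 0, extends continuously to s = 0 with x(0) = 0 and x'(0) ≠ 0. Then sin θ(0) = 0; i.e., the curve meets the rotation axis perpendicularly. -/

import Mathlib

/-- Auxiliary: a function whose derivative is ≤ -K/s on (0, ε] cannot extend
continuously to 0 from the right. -/
lemma aux_blowup (f f' : ℝ → ℝ) (ε K : ℝ) (hε : 0 < ε) (hK : 0 < K)
    (hder : ∀ s ∈ Set.Ioc 0 ε, HasDerivAt f (f' s) s)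
    (hbnd : ∀ s ∈ Set.Ioc 0 ε, f' s ≤ -K / s)
    (hc : ContinuousWithinAt f (Set.Ici 0) 0) : False := by
  set φ : ℝ → ℝ := fun s => f s + K * Real.log s with hφ
  have hφder : ∀ s ∈ Set.Ioo 0 ε, HasDerivAt φ (f' s + K * s⁻¹) s := by
    intro s hs
    exact (hder s ⟨hs.1, hs.2.le⟩).add ((Real.hasDerivAt_log hs.1.ne').const_mul K)
  have hanti : AntitoneOn φ (Set.Ioc 0 ε) := by
    apply antitoneOn_of_deriv_nonpos (convex_Ioc 0 ε)
    · intro s hs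
      exact ((hder s hs).continuousAt.continuousWithinAt).add
        ((continuousAt_const.mul (Real.continuousAt_log hs.1.ne')).continuousWithinAt)
    · intro s hs
      rw [interior_Ioc] at hs
      exact ((hφder s hs).differentiableAt).differentiableWithinAt
    · intro s hs
      rw [interior_Ioc] at hs
      rw [(hφder s hs).deriv]
      have := hbnd s ⟨hs.1, hs.2.le⟩
      have h1 : -K / s = -(K * s⁻¹) := by field_simp
      linarith [this, h1 ▸ this]
  obtain ⟨δ, hδ, hδf⟩ := Metric.continuousWithinAt_iff.mp hc 1 one_pos
  set e0 : ℝ := (φ ε - f 0 - 2) / K with he0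
  set s₀ : ℝ := min (min (δ / 2) ε) (Real.exp e0) with hs₀
  have hs₀pos : 0 < s₀ := by positivity
  have hs₀ε : s₀ ≤ ε := le_trans (min_le_left _ _) (min_le_right _ _)
  have hs₀mem : s₀ ∈ Set.Ioc 0 ε := ⟨hs₀pos, hs₀ε⟩
  have hlog : K * Real.log s₀ ≤ φ ε - f 0 - 2 := by
    have h1 : Real.log s₀ ≤ e0 := by
      rw [Real.log_le_iff_le_exp hs₀pos]
      exact le_trans (min_le_right _ _) (le_refl _)
    calc K * Real.log s₀ ≤ K * e0 := by nlinarith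
      _ = φ ε - f 0 - 2 := by rw [he0]; field_simp
  have hmono := hanti hs₀mem ⟨hε, le_refl ε⟩ hs₀ε
  -- φ ε ≤ φ s₀, i.e. f s₀ ≥ φ ε - K log s₀ ≥ f 0 + 2
  have hbig : f 0 + 2 ≤ f s₀ := by
    have : φ ε ≤ f s₀ + K * Real.log s₀ := hmono
    linarith
  have hdist : dist s₀ 0 < δ := by
    rw [Real.dist_eq, sub_zero, abs_of_pos hs₀pos]
    have : s₀ ≤ δ / 2 := le_trans (min_le_left _ _) (min_le_left _ _)
    linarith
  have hsmall := hδf (Set.mem_Ici.mpr hs₀pos.le) hdist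
  rw [Real.dist_eq] at hsmall
  have := abs_lt.mp hsmall
  linarith [this.1, this.2]

/-- If the profile curve of a rotational `λ`-translating soliton reaches the rotation
axis (`x 0 = 0`, `x > 0` for `s > 0`, the ODE holding for `s > 0`), extends
continuously to `s = 0` and has nonvanishing one-sided derivative `x'(0) ≠ 0` there,
then `sin θ(0) = 0`: the curve meets the axis perpendicularly. -/
theorem stmt17 (lam : ℝ) (x z θ : ℝ → ℝ) (d : ℝ)
    (hxpos : ∀ s : ℝ, 0 < s → 0 < x s)
    (hx : ∀ s : ℝ, 0 < s → HasDerivAt x (Real.cos (θ s)) s)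
    (hz : ∀ s : ℝ, 0 < s → HasDerivAt z (Real.sin (θ s)) s)
    (hθ : ∀ s : ℝ, 0 < s → HasDerivAt θ
      (2*lam + Real.cos (θ s) - Real.sin (θ s) / x s) s)
    (hx0 : x 0 = 0)
    (hxc : ContinuousWithinAt x (Set.Ici 0) 0)
    (hθc : ContinuousWithinAt θ (Set.Ici 0) 0)
    (hx'0 : HasDerivWithinAt x d (Set.Ici 0) 0) (hd : d ≠ 0) :
    Real.sin (θ 0) = 0 := by
  by_contra hc0
  set c : ℝ := Real.sin (θ 0) with hc
  have hcne : c ≠ 0 := hc0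
  have hIci : Set.Ici (0:ℝ) \ {0} = Set.Ioi 0 := by
    ext t; simp [Set.mem_Ici, Set.mem_Ioi, lt_iff_le_and_ne, eq_comm]
  have hslope : Filter.Tendsto (slope x 0) (nhdsWithin 0 (Set.Ioi 0)) (nhds d) := by
    have := hasDerivWithinAt_iff_tendsto_slope.mp hx'0
    rwa [hIci] at this
  -- d > 0
  have hd0 : 0 ≤ d := by
    refine ge_of_tendsto hslope ?_
    filter_upwards [self_mem_nhdsWithin] with s hs
    rw [slope_def_field]
    have hs0 : (0:ℝ) < s := hs
    rw [hx0, sub_zero, sub_zero]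
    exact div_nonneg (hxpos s hs0).le hs0.le
  have hdpos : 0 < d := lt_of_le_of_ne hd0 (Ne.symm hd)
  -- eventually x s < 2 d s
  have h2d : ∀ᶠ s in nhdsWithin 0 (Set.Ioi 0), x s < 2 * d * s := by
    have h := hslope.eventually_lt_const (show d < 2 * d by linarith)
    filter_upwards [h, self_mem_nhdsWithin] with s hs hs0
    have hs0' : (0:ℝ) < s := hs0
    rw [slope_def_field, hx0, sub_zero, sub_zero, div_lt_iff₀ hs0'] at hs
    linarith
  -- eventually sin θ s is within |c|/2 of c
  have hsinc : Filter.Tendsto (fun s => Real.sin (θ s)) (nhdsWithin 0 (Set.Ici 0))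
      (nhds c) := (Real.continuous_sin.continuousAt.tendsto).comp hθc
  have habs : (0:ℝ) < |c| / 2 := by positivity
  have hsin : ∀ᶠ s in nhdsWithin 0 (Set.Ioi 0), |Real.sin (θ s) - c| < |c| / 2 := by
    have h := hsinc.eventually (Metric.ball_mem_nhds c habs)
    have h2 : nhdsWithin (0:ℝ) (Set.Ioi 0) ≤ nhdsWithin 0 (Set.Ici 0) :=
      nhdsWithin_mono 0 Set.Ioi_subset_Ici_self
    filter_upwards [h.filter_mono h2] with s hs
    rwa [Real.dist_eq] at hs
  set K : ℝ := |c| / (4 * d) with hK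
  have hKpos : 0 < K := by positivity
  set s₁ : ℝ := K / (2 * (2 * |lam| + 1)) with hs₁
  have hs₁pos : 0 < s₁ := by positivity
  have hsmall : ∀ᶠ s in nhdsWithin 0 (Set.Ioi 0), s < s₁ :=
    (Filter.Tendsto.eventually_lt_const hs₁pos Filter.tendsto_id).filter_mono nhdsWithin_le_nhds
  have hall := (h2d.and (hsin.and hsmall)).and self_mem_nhdsWithin
  rw [Filter.eventually_iff, mem_nhdsGT_iff_exists_Ioc_subset] at hall
  obtain ⟨u, hu, huP⟩ := hall
  have hu0 : (0:ℝ) < u := hu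
  -- key derivative bound
  rcases hcne.lt_or_gt with hneg | hpos
  · -- c < 0 : θ' ≥ (K/2)/s, apply blow-up lemma to -θ
    have habsc : |c| = -c := abs_of_neg hneg
    refine aux_blowup (fun s => -θ s)
      (fun s => -(2*lam + Real.cos (θ s) - Real.sin (θ s) / x s)) u (K/2) hu0
      (by positivity) (fun s hs => (hθ s hs.1).neg) ?_ hθc.neg
    intro s hs
    obtain ⟨⟨hxs, hsins, hss₁⟩, hs0⟩ := huP hs
    have hs0' : (0:ℝ) < s := hs0
    have hxpos' := hxpos s hs0'
    have h1 : Real.sin (θ s) ≤ c / 2 := by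
      have := abs_lt.mp hsins
      rw [habsc] at this
      linarith [this.2]
    have hquot : Real.sin (θ s) / x s ≤ c / 2 / (2 * d * s) := by
      rw [div_le_div_iff₀ hxpos' (by positivity)]
      nlinarith
    have heq : c / 2 / (2 * d * s) = -(K / s) := by
      rw [hK, habsc]; field_simp
      ring
    have hcos : Real.cos (θ s) ≥ -1 := Real.neg_one_le_cos _
    have hlam : 2 * lam ≥ -(2 * |lam|) := by
      have := abs_le.mp (le_refl |lam|)
      linarith [neg_abs_le lam]
    -- need: -(2λ + cos - sin/x) ≤ -(K/2)/s
    have hKs : 2 * |lam| + 1 ≤ K / (2 * s) := by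
      rw [le_div_iff₀ (by positivity)]
      have h4 : s * (2 * (2 * |lam| + 1)) < K := by
        rw [hs₁, lt_div_iff₀ (by positivity)] at hss₁
        exact hss₁
      nlinarith
    have : Real.sin (θ s) / x s ≤ -(K/s) := heq ▸ hquot
    have hfin : 2*lam + Real.cos (θ s) - Real.sin (θ s) / x s ≥ (K/2)/s := by
      have hKs2 : K / s - K / (2*s) = K / (2*s) := by field_simp; ring
      have : -(2*|lam|) - 1 + K/s ≥ (K/2)/s := by
        have h3 : (K/2)/s = K/(2*s) := by field_simp
        rw [h3]
        linarith [hKs]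
      linarith
    have hng : -(K/2)/s = -((K/2)/s) := neg_div s (K/2)
    rw [hng]
    linarith
  · -- c > 0 : θ' ≤ -(K/2)/s, apply blow-up lemma to θ
    have habsc : |c| = c := abs_of_pos hpos
    refine aux_blowup θ
      (fun s => 2*lam + Real.cos (θ s) - Real.sin (θ s) / x s) u (K/2) hu0
      (by positivity) (fun s hs => hθ s hs.1) ?_ hθc
    intro s hs
    obtain ⟨⟨hxs, hsins, hss₁⟩, hs0⟩ := huP hs
    have hs0' : (0:ℝ) < s := hs0
    have hxpos' := hxpos s hs0'
    have h1 : c / 2 ≤ Real.sin (θ s) := by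
      have := abs_lt.mp hsins
      rw [habsc] at this
      linarith [this.1]
    have hquot : c / 2 / (2 * d * s) ≤ Real.sin (θ s) / x s := by
      rw [div_le_div_iff₀ (by positivity) hxpos']
      nlinarith
    have heq : c / 2 / (2 * d * s) = K / s := by
      rw [hK, habsc]; field_simp
      ring
    have hcos : Real.cos (θ s) ≤ 1 := Real.cos_le_one _
    have hlam : 2 * lam ≤ 2 * |lam| := by linarith [le_abs_self lam]
    have hKs : 2 * |lam| + 1 ≤ K / (2 * s) := by
      rw [le_div_iff₀ (by positivity)]
      have h4 : s * (2 * (2 * |lam| + 1)) < K := by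
        rw [hs₁, lt_div_iff₀ (by positivity)] at hss₁
        exact hss₁
      nlinarith
    have hsx : K / s ≤ Real.sin (θ s) / x s := heq ▸ hquot
    have h3 : (K/2)/s = K/(2*s) := by field_simp
    have hKs2 : K / s - K / (2*s) = K / (2*s) := by field_simp; ring
    have hng : -(K/2)/s = -((K/2)/s) := neg_div s (K/2)
    rw [hng, h3]
    linarith
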